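/- Let p ∈ (1/2, 1), n ≥ 1, and 0 ≤ k ≤ 2^n. Suppose an ordered perfect binary tree t of depth n with leaf labels in {0,1} and exactly k leaves labeled 1 maximizes B_p among all such trees with exactly k ones. Then the number of 1-labeled leaves in the left subtree of the root and the number in the right subtree differ by at most 1. -/

import Mathlib

/-- A perfect (balanced) binary tree of depth `n` with leaves labelled by `α`. -/
inductive BT (α : Type) : ℕ → Type
  | leaf : α → BT α 0
  | node {n : ℕ} : BT α n → BT α n → BT α (n + 1)

namespace BT

/-- The list of leaf labels, from left to right. -/
def leaves {α : Type} : ∀ {n : ℕ}, BT α n → List α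
  | _, .leaf a => [a]
  | _, .node L R => L.leaves ++ R.leaves

/-- Relabel the leaves of a tree. -/
def map {α β : Type} (f : α → β) : ∀ {n : ℕ}, BT α n → BT β n
  | _, .leaf a => .leaf (f a)
  | _, .node L R => .node (L.map f) (R.map f)

end BT

/-- Two trees represent the same draw iff one can be obtained from the other by
swapping the two children subtrees at internal nodes. -/
def BTequiv {α : Type} : ∀ {n : ℕ}, BT α n → BT α n → Prop
  | 0, .leaf a, .leaf b => a = b
  | _ + 1, .node L R, .node L' R' =>
      (BTequiv L L' ∧ BTequiv R R') ∨ (BTequiv L R' ∧ BTequiv R L')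

/-- A draw: each of the `N` players occurs exactly once among the leaves. -/
def IsDraw {N n : ℕ} (t : BT (Fin N) n) : Prop :=
  ∀ i : Fin N, t.leaves.count i = 1

/-- The winning distribution of a knockout tournament: `wd P t i` is the probability
that player `i` wins the (sub)tournament with draw `t` and comparison matrix `P`. -/
noncomputable def wd {N : ℕ} (P : Fin N → Fin N → ℝ) :
    ∀ {n : ℕ}, BT (Fin N) n → Fin N → ℝ
  | _, .leaf j => fun i => if i = j then 1 else 0
  | _, .node L R => fun i =>
      wd P L i * (∑ j, wd P R j * P i j) + wd P R i * (∑ j, wd P L j * P i j)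

/-- `P` is a comparison matrix. -/
def IsCompMatrix {N : ℕ} (P : Fin N → Fin N → ℝ) : Prop :=
  ∀ i j : Fin N, i ≠ j → 0 ≤ P i j ∧ P i j ≤ 1 ∧ P i j + P j i = 1

/-- `P` is deterministic: every off-diagonal entry is 0 or 1. -/
def IsDet {N : ℕ} (P : Fin N → Fin N → ℝ) : Prop :=
  ∀ i j : Fin N, i ≠ j → P i j = 0 ∨ P i j = 1

/-- The set `𝒫(P,ε)` of ε-perturbations of `P`. -/
def perturbs {N : ℕ} (P : Fin N → Fin N → ℝ) (ε : ℝ) : Set (Fin N → Fin N → ℝ) :=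
  {P' | IsCompMatrix P' ∧ ∀ i j : Fin N, i ≠ j → |P' i j - P i j| ≤ ε}

/-- The ε-guaranteed winning probability `wp_ε(i,P,σ)`. -/
noncomputable def wpe {N n : ℕ} (i : Fin N) (P : Fin N → Fin N → ℝ) (ε : ℝ)
    (t : BT (Fin N) n) : ℝ :=
  sInf ((fun P' => wd P' t i) '' perturbs P ε)

/-- The comparison matrix of the hard `n`-round tournament `H_n` (players 0-indexed):
for `i < j`, player `i` beats player `j` iff `i = j - 2 ^ v` where `2 ^ v` is the largest
power of 2 dividing `j` (in 0-indexed numbering). -/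
noncomputable def hardP (n : ℕ) : Fin (2 ^ n) → Fin (2 ^ n) → ℝ := fun i j =>
  if i = j then 0
  else if (i : ℕ) < (j : ℕ) then
    (if (i : ℕ) + 2 ^ padicValNat 2 (j : ℕ) = (j : ℕ) then 1 else 0)
  else
    (if (j : ℕ) + 2 ^ padicValNat 2 (i : ℕ) = (i : ℕ) then 0 else 1)

/-- The tree of depth `n` whose leaves are `s, s+1, …, s + 2^n - 1` from left to right. -/
def ordTree : (n : ℕ) → ℕ → BT ℕ n
  | 0, s => .leaf s
  | n + 1, s => .node (ordTree n s) (ordTree n (s + 2 ^ n))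

/-- The identity draw, placing players `0, 1, …, 2^n - 1` on the leaves in order. -/
def idDraw (n : ℕ) : BT (Fin (2 ^ n)) n :=
  (ordTree n 0).map (fun k => ⟨k % 2 ^ n, Nat.mod_lt _ (by positivity)⟩)

/-- `f_p(x,y) = p(x+y) + (1-2p)xy`. -/
def fp (p x y : ℝ) : ℝ := p * (x + y) + (1 - 2 * p) * x * y

/-- `B_p` on trees with real leaf labels. -/
noncomputable def Bp (p : ℝ) : ∀ {n : ℕ}, BT ℝ n → ℝ
  | _, .leaf x => x
  | _, .node L R => fp p (Bp p L) (Bp p R)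

/-- Group a list into consecutive pairs. -/
def pairList {α : Type} : List α → List (α × α)
  | a :: b :: rest => (a, b) :: pairList rest
  | _ => []

/-- The first-round matches of a draw: the consecutive sibling pairs of leaves. -/
def firstPairs {α : Type} {n : ℕ} (t : BT α n) : List (α × α) := pairList t.leaves

/-- A draw is mixed (w.r.t. the set `B` of big players) if every first-round match
pairs a big player with a small player. -/
def MixedDraw {N n : ℕ} (B : Finset (Fin N)) (t : BT (Fin N) n) : Prop :=
  ∀ q ∈ firstPairs t, ((q.1 ∈ B) ↔ q.2 ∉ B)

/-- Number of leaves labelled `1`. -/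
noncomputable def ones {n : ℕ} (t : BT ℝ n) : ℕ := t.leaves.count 1

/-- All leaf labels are `0` or `1`. -/
def ZeroOne {n : ℕ} (t : BT ℝ n) : Prop := ∀ x ∈ t.leaves, x = 0 ∨ x = 1

/-- `P[kl←t]`: the matrix agreeing with `P` except `P k l = t` and `P l k = 1 - t`. -/
def updPair {N : ℕ} (P : Fin N → Fin N → ℝ) (k l : Fin N) (t : ℝ) :
    Fin N → Fin N → ℝ :=
  fun i j => if i = k ∧ j = l then t else if i = l ∧ j = k then 1 - t else P i j

/-- Perturb a deterministic matrix: for each pair `(w, l) ∈ S` (winner first),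
set `P w l = 1 - ε` and `P l w = ε`; other entries unchanged. -/
def detPerturb {N : ℕ} (P : Fin N → Fin N → ℝ) (S : Finset (Fin N × Fin N)) (ε : ℝ) :
    Fin N → Fin N → ℝ :=
  fun i j => if (i, j) ∈ S then 1 - ε else if (j, i) ∈ S then ε else P i j

/-- Swap the result of the single match between `a` and `b`. -/
def swapPair {N : ℕ} (P : Fin N → Fin N → ℝ) (a b : Fin N) : Fin N → Fin N → ℝ :=
  fun i j => if i = a ∧ j = b then P b a else if i = b ∧ j = a then P a b else P i j

/-- The pair `(a,b)` (with `a` the winner) is crucial for `i` in `C(P,σ)`. -/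
def Crucial {N n : ℕ} (P : Fin N → Fin N → ℝ) (σ : BT (Fin N) n) (i : Fin N)
    (a b : Fin N) : Prop :=
  a ≠ b ∧ P a b = 1 ∧ wd (swapPair P a b) σ i = 0

/-! ### Auxiliary development for Statement 9 -/

namespace Aux

/-- The optimal value of depth-`n` trees with `k` ones: balanced recursion. -/
noncomputable def Mv (p : ℝ) : ℕ → ℕ → ℝ
  | 0, k => if k = 0 then 0 else 1
  | n + 1, k => fp p (Mv p n ((k + 1) / 2)) (Mv p n (k / 2))

lemma fp_comm (p x y : ℝ) : fp p x y = fp p y x := by unfold fp; ring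

lemma fp_mem {p : ℝ} (hp1 : 1 / 2 < p) (hp2 : p < 1) {x y : ℝ}
    (hx0 : 0 ≤ x) (hx1 : x ≤ 1) (hy0 : 0 ≤ y) (hy1 : y ≤ 1) :
    0 ≤ fp p x y ∧ fp p x y ≤ 1 := by
  unfold fp
  constructor
  · nlinarith [mul_nonneg hx0 hy0,
      mul_nonneg (mul_nonneg hx0 hy0) (sub_nonneg.2 hp2.le),
      mul_nonneg hx0 (sub_nonneg.2 hy1), mul_nonneg hy0 (sub_nonneg.2 hx1)]
  · nlinarith [mul_nonneg (sub_nonneg.2 hx1) (sub_nonneg.2 hy1),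
      mul_nonneg (mul_nonneg (sub_nonneg.2 hp2.le) hx0) (sub_nonneg.2 hy1),
      mul_nonneg (mul_nonneg (sub_nonneg.2 hp2.le) hy0) (sub_nonneg.2 hx1)]

lemma M_mem {p : ℝ} (hp1 : 1 / 2 < p) (hp2 : p < 1) :
    ∀ n k, k ≤ 2 ^ n → 0 ≤ Mv p n k ∧ Mv p n k ≤ 1 := by
  intro n
  induction n with
  | zero => intro k hk; unfold Mv; split <;> norm_num
  | succ n ih =>
    intro k hk
    have h2 : 2 ^ (n + 1) = 2 * 2 ^ n := by ring
    obtain ⟨a0, a1⟩ := ih ((k + 1) / 2) (by omega)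
    obtain ⟨b0, b1⟩ := ih (k / 2) (by omega)
    exact fp_mem hp1 hp2 a0 a1 b0 b1

lemma phi_pos {p : ℝ} (hp1 : 1 / 2 < p) (hp2 : p < 1) {x : ℝ}
    (hx0 : 0 ≤ x) (hx1 : x ≤ 1) : 0 < p + (1 - 2 * p) * x := by nlinarith

lemma M_mono {p : ℝ} (hp1 : 1 / 2 < p) (hp2 : p < 1) :
    ∀ n k, k + 1 ≤ 2 ^ n → Mv p n k < Mv p n (k + 1) := by
  intro n
  induction n with
  | zero =>
    intro k hk
    have : k = 0 := by simpa using hk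
    subst this; unfold Mv; norm_num
  | succ n ih =>
    intro k hk
    have h2 : 2 ^ (n + 1) = 2 * 2 ^ n := by ring
    rcases Nat.even_or_odd k with ⟨c, hc⟩ | ⟨c, hc⟩
    · -- k = 2c : split (c,c) → (c+1,c)
      subst hc
      have e1 : (c + c + 1) / 2 = c := by omega
      have e2 : (c + c) / 2 = c := by omega
      have e3 : (c + c + 1 + 1) / 2 = c + 1 := by omega
      have hd := ih c (by omega)
      obtain ⟨m0, m1⟩ := M_mem hp1 hp2 n c (by omega)
      show Mv p (n + 1) (c + c) < Mv p (n + 1) (c + c + 1)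
      unfold Mv
      rw [e1, e2, e3]
      unfold fp
      nlinarith [mul_pos (sub_pos.2 hd) (phi_pos hp1 hp2 m0 m1)]
    · -- k = 2c+1 : split (c+1,c) → (c+1,c+1)
      subst hc
      have e1 : (2 * c + 1 + 1) / 2 = c + 1 := by omega
      have e2 : (2 * c + 1) / 2 = c := by omega
      have e3 : (2 * c + 1 + 1 + 1) / 2 = c + 1 := by omega
      have hd := ih c (by omega)
      obtain ⟨m0, m1⟩ := M_mem hp1 hp2 n (c + 1) (by omega)
      show Mv p (n + 1) (2 * c + 1) < Mv p (n + 1) (2 * c + 1 + 1)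
      unfold Mv
      rw [e1, e2, e3]
      unfold fp
      nlinarith [mul_pos (sub_pos.2 hd) (phi_pos hp1 hp2 m0 m1)]

/-- Key adjacent concavity: `(M(k+2)-M(k+1))·φ(M(k+1)) < (M(k+1)-M(k))·φ(M(k+2))`. -/
lemma M_RD {p : ℝ} (hp1 : 1 / 2 < p) (hp2 : p < 1) :
    ∀ n k, k + 2 ≤ 2 ^ n →
      (Mv p n (k + 2) - Mv p n (k + 1)) * (p + (1 - 2 * p) * Mv p n (k + 1)) <
      (Mv p n (k + 1) - Mv p n k) * (p + (1 - 2 * p) * Mv p n (k + 2)) := by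
  intro n
  induction n with
  | zero => intro k hk; omega
  | succ n ih =>
    intro k hk
    have h2 : 2 ^ (n + 1) = 2 * 2 ^ n := by ring
    rcases Nat.even_or_odd k with ⟨c, hc⟩ | ⟨c, hc⟩
    · -- k = 2c, uses u > v only
      subst hc
      have e0 : (c + c + 1) / 2 = c := by omega
      have e0' : (c + c) / 2 = c := by omega
      have e1 : (c + c + 1 + 1) / 2 = c + 1 := by omega
      have e2 : (c + c + 2 + 1) / 2 = c + 1 := by omega
      have e2' : (c + c + 2) / 2 = c + 1 := by omega
      have hd := M_mono hp1 hp2 n c (by omega)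
      obtain ⟨m0, m1⟩ := M_mem hp1 hp2 n c (by omega)
      obtain ⟨m0', m1'⟩ := M_mem hp1 hp2 n (c + 1) (by omega)
      have hu : 0 < p + (1 - 2 * p) * Mv p n c := phi_pos hp1 hp2 m0 m1
      have hv : 0 < p + (1 - 2 * p) * Mv p n (c + 1) := phi_pos hp1 hp2 m0' m1'
      have huv : p + (1 - 2 * p) * Mv p n (c + 1) < p + (1 - 2 * p) * Mv p n c := by
        nlinarith
      have hq : (0:ℝ) < p * (1 - p) := by nlinarith
      show (Mv p (n+1) (c + c + 2) - Mv p (n+1) (c + c + 1)) * (p + (1 - 2 * p) * Mv p (n+1) (c + c + 1)) <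
           (Mv p (n+1) (c + c + 1) - Mv p (n+1) (c + c)) * (p + (1 - 2 * p) * Mv p (n+1) (c + c + 2))
      unfold Mv
      simp only [e0, e0', e1, e2, e2']
      unfold fp
      nlinarith [mul_pos (mul_pos (sub_pos.2 hd) hq) (sub_pos.2 huv)]
    · -- k = 2c+1, uses the inductive hypothesis at c
      subst hc
      have e1 : (2 * c + 1 + 1) / 2 = c + 1 := by omega
      have e1' : (2 * c + 1) / 2 = c := by omega
      have e2 : (2 * c + 1 + 1 + 1) / 2 = c + 1 := by omega
      have e2' : (2 * c + 1 + 1) / 2 = c + 1 := by omega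
      have e3 : (2 * c + 1 + 2 + 1) / 2 = c + 2 := by omega
      have e3' : (2 * c + 1 + 2) / 2 = c + 1 := by omega
      have hd := M_mono hp1 hp2 n c (by omega)
      have hd' := M_mono hp1 hp2 n (c + 1) (by omega)
      obtain ⟨m0, m1⟩ := M_mem hp1 hp2 n c (by omega)
      obtain ⟨m0', m1'⟩ := M_mem hp1 hp2 n (c + 1) (by omega)
      obtain ⟨m0'', m1''⟩ := M_mem hp1 hp2 n (c + 2) (by omega)
      have hv : 0 < p + (1 - 2 * p) * Mv p n (c + 1) := phi_pos hp1 hp2 m0' m1'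
      have hw : 0 < p + (1 - 2 * p) * Mv p n (c + 2) := phi_pos hp1 hp2 m0'' m1''
      have hvw : p + (1 - 2 * p) * Mv p n (c + 2) < p + (1 - 2 * p) * Mv p n (c + 1) := by
        nlinarith
      have hq : (0:ℝ) < p * (1 - p) := by nlinarith
      have hIH := ih c (by omega)
      -- d_c > d_{c+1}
      have hdd : Mv p n (c + 2) - Mv p n (c + 1) < Mv p n (c + 1) - Mv p n c := by
        nlinarith [mul_pos (sub_pos.2 hd') (sub_pos.2 hvw)]
      show (Mv p (n+1) (2 * c + 1 + 2) - Mv p (n+1) (2 * c + 1 + 1)) * (p + (1 - 2 * p) * Mv p (n+1) (2 * c + 1 + 1)) <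
           (Mv p (n+1) (2 * c + 1 + 1) - Mv p (n+1) (2 * c + 1)) * (p + (1 - 2 * p) * Mv p (n+1) (2 * c + 1 + 2))
      unfold Mv
      simp only [e1, e1', e2, e2', e3, e3']
      unfold fp
      nlinarith [mul_pos hv (add_pos (mul_pos hv (sub_pos.2 hIH)) (mul_pos hq (sub_pos.2 hdd))),
        mul_pos hv hv, mul_pos hv hw]

noncomputable def rv (p : ℝ) (n k : ℕ) : ℝ :=
  (Mv p n (k + 1) - Mv p n k) / (p + (1 - 2 * p) * Mv p n (k + 1))

lemma rv_adj {p : ℝ} (hp1 : 1 / 2 < p) (hp2 : p < 1) {n k : ℕ} (hk : k + 2 ≤ 2 ^ n) :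
    rv p n (k + 1) < rv p n k := by
  obtain ⟨m0, m1⟩ := M_mem hp1 hp2 n (k + 1) (by omega)
  obtain ⟨m0', m1'⟩ := M_mem hp1 hp2 n (k + 2) (by omega)
  have h1 : 0 < p + (1 - 2 * p) * Mv p n (k + 1) := phi_pos hp1 hp2 m0 m1
  have h2 : 0 < p + (1 - 2 * p) * Mv p n (k + 2) := phi_pos hp1 hp2 m0' m1'
  unfold rv
  rw [div_lt_div_iff₀ h2 h1]
  exact M_RD hp1 hp2 n k hk

lemma rv_anti {p : ℝ} (hp1 : 1 / 2 < p) (hp2 : p < 1) {n : ℕ} :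
    ∀ i j, i < j → j + 1 ≤ 2 ^ n → rv p n j < rv p n i := by
  intro i j hij
  induction j with
  | zero => omega
  | succ j ihj =>
    intro hj
    rcases Nat.lt_or_ge i j with h | h
    · exact lt_trans (rv_adj hp1 hp2 (by omega)) (ihj h (by omega))
    · have : i = j := by omega
      subst this
      exact rv_adj hp1 hp2 (by omega)

/-- Moving a one from the big side to the small side strictly increases `fp`. -/
lemma M_C {p : ℝ} (hp1 : 1 / 2 < p) (hp2 : p < 1) {n a b : ℕ}
    (hab : b + 1 ≤ a) (ha : a + 1 ≤ 2 ^ n) :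
    fp p (Mv p n (a + 1)) (Mv p n b) < fp p (Mv p n a) (Mv p n (b + 1)) := by
  have hr := rv_anti hp1 hp2 b a (by omega) ha
  obtain ⟨m0, m1⟩ := M_mem hp1 hp2 n (b + 1) (by omega)
  obtain ⟨m0', m1'⟩ := M_mem hp1 hp2 n (a + 1) (by omega)
  have h1 : 0 < p + (1 - 2 * p) * Mv p n (b + 1) := phi_pos hp1 hp2 m0 m1
  have h2 : 0 < p + (1 - 2 * p) * Mv p n (a + 1) := phi_pos hp1 hp2 m0' m1'
  unfold rv at hr
  rw [div_lt_div_iff₀ h2 h1] at hr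
  unfold fp
  nlinarith [hr]

/-- Rebalancing: any split is at most the balanced split. -/
lemma RB {p : ℝ} (hp1 : 1 / 2 < p) (hp2 : p < 1) {n : ℕ} :
    ∀ a b, b ≤ a → a ≤ 2 ^ n →
      fp p (Mv p n a) (Mv p n b) ≤
      fp p (Mv p n ((a + b + 1) / 2)) (Mv p n ((a + b) / 2)) := by
  intro a
  induction a using Nat.strong_induction_on with
  | _ a iha =>
    intro b hba ha
    rcases Nat.lt_or_ge a (b + 2) with h | h
    · -- a = b or a = b + 1 : already balanced
      rcases Nat.lt_or_ge a (b + 1) with h' | h'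
      · have : a = b := by omega
        subst this
        have e1 : (a + a + 1) / 2 = a := by omega
        have e2 : (a + a) / 2 = a := by omega
        rw [e1, e2]
      · have : a = b + 1 := by omega
        subst this
        have e1 : (b + 1 + b + 1) / 2 = b + 1 := by omega
        have e2 : (b + 1 + b) / 2 = b := by omega
        rw [e1, e2]
    · -- a ≥ b + 2 : improve strictly and recurse
      obtain ⟨a', rfl⟩ : ∃ a', a = a' + 1 := ⟨a - 1, by omega⟩
      have step := M_C hp1 hp2 (n := n) (a := a') (b := b) (by omega) ha
      have hrec := iha a' (by omega) (b + 1) (by omega) (by omega)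
      have e1 : (a' + (b + 1) + 1) / 2 = (a' + 1 + b + 1) / 2 := by omega
      have e2 : (a' + (b + 1)) / 2 = (a' + 1 + b) / 2 := by omega
      rw [e1, e2] at hrec
      exact le_trans step.le hrec

lemma RB' {p : ℝ} (hp1 : 1 / 2 < p) (hp2 : p < 1) {n a b : ℕ}
    (ha : a ≤ 2 ^ n) (hb : b ≤ 2 ^ n) :
    fp p (Mv p n a) (Mv p n b) ≤ Mv p (n + 1) (a + b) := by
  show _ ≤ fp p (Mv p n ((a + b + 1) / 2)) (Mv p n ((a + b) / 2))
  rcases le_total b a with h | h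
  · exact RB hp1 hp2 a b h ha
  · rw [fp_comm]
    have := RB hp1 hp2 b a h hb
    rwa [Nat.add_comm b a] at this



lemma leaves_length {α : Type} : ∀ {n : ℕ} (t : BT α n), t.leaves.length = 2 ^ n
  | _, .leaf a => rfl
  | _, .node L R => by
    simp [BT.leaves, leaves_length L, leaves_length R, pow_succ]
    ring

lemma ones_node {n : ℕ} (L R : BT ℝ n) : ones (.node L R) = ones L + ones R := by
  simp [ones, BT.leaves, List.count_append]

lemma ones_le {n : ℕ} (t : BT ℝ n) : ones t ≤ 2 ^ n := by
  rw [← leaves_length t]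
  exact List.count_le_length

lemma zeroOne_node {n : ℕ} {L R : BT ℝ n} (h : ZeroOne (.node L R)) :
    ZeroOne L ∧ ZeroOne R := by
  constructor <;> intro x hx <;> apply h x
  · exact List.mem_append_left _ hx
  · exact List.mem_append_right _ hx

lemma ones_leaf_zero : ones (.leaf (0 : ℝ)) = 0 := by
  simp [ones, BT.leaves]

lemma ones_leaf_one : ones (.leaf (1 : ℝ)) = 1 := by
  simp [ones, BT.leaves]


lemma fp_mono {p : ℝ} (hp1 : 1 / 2 < p) (hp2 : p < 1) {x x' y y' : ℝ}
    (hx : x ≤ x') (hy : y ≤ y') (hy0 : 0 ≤ y) (hy1 : y ≤ 1)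
    (hx0 : 0 ≤ x') (hx1 : x' ≤ 1) : fp p x y ≤ fp p x' y' := by
  unfold fp
  nlinarith [mul_nonneg (sub_nonneg.2 hx) (phi_pos hp1 hp2 hy0 hy1).le,
    mul_nonneg (sub_nonneg.2 hy) (phi_pos hp1 hp2 hx0 hx1).le]

lemma Bp_mem {p : ℝ} (hp1 : 1 / 2 < p) (hp2 : p < 1) :
    ∀ {n : ℕ} (t : BT ℝ n), ZeroOne t → 0 ≤ Bp p t ∧ Bp p t ≤ 1
  | _, .leaf a, h => by
      rcases h a (by simp [BT.leaves]) with rfl | rfl <;> norm_num [Bp]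
  | _, .node L R, h => by
      obtain ⟨hL, hR⟩ := zeroOne_node h
      obtain ⟨l0, l1⟩ := Bp_mem hp1 hp2 L hL
      obtain ⟨r0, r1⟩ := Bp_mem hp1 hp2 R hR
      exact fp_mem hp1 hp2 l0 l1 r0 r1

lemma Bp_le_M {p : ℝ} (hp1 : 1 / 2 < p) (hp2 : p < 1) :
    ∀ {n : ℕ} (t : BT ℝ n), ZeroOne t → Bp p t ≤ Mv p n (ones t)
  | _, .leaf a, h => by
      rcases h a (by simp [BT.leaves]) with rfl | rfl
      · rw [ones_leaf_zero]; norm_num [Bp, Mv]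
      · rw [ones_leaf_one]; norm_num [Bp, Mv]
  | _, .node L R, h => by
      obtain ⟨hL, hR⟩ := zeroOne_node h
      obtain ⟨r0, r1⟩ := Bp_mem hp1 hp2 R hR
      obtain ⟨mL0, mL1⟩ := M_mem hp1 hp2 _ (ones L) (ones_le L)
      obtain ⟨mR0, mR1⟩ := M_mem hp1 hp2 _ (ones R) (ones_le R)
      have h1 : Bp p (.node L R) ≤ fp p (Mv p _ (ones L)) (Mv p _ (ones R)) :=
        fp_mono hp1 hp2 (Bp_le_M hp1 hp2 L hL) (Bp_le_M hp1 hp2 R hR) r0 r1 mL0 mL1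
      have h2 := RB' hp1 hp2 (ones_le L) (ones_le R)
      rw [ones_node]
      exact le_trans h1 h2

/-- The balanced 0/1 tree with `k` ones. -/
noncomputable def balT : (n : ℕ) → ℕ → BT ℝ n
  | 0, k => .leaf (if k = 0 then 0 else 1)
  | n + 1, k => .node (balT n ((k + 1) / 2)) (balT n (k / 2))

lemma balT_zeroOne : ∀ n k, ZeroOne (balT n k)
  | 0, k => by
      intro x hx
      simp only [balT, BT.leaves, List.mem_singleton] at hx
      subst hx
      split <;> simp
  | n + 1, k => by
      intro x hx
      simp only [balT, BT.leaves, List.mem_append] at hx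
      rcases hx with hx | hx
      · exact balT_zeroOne n _ x hx
      · exact balT_zeroOne n _ x hx

lemma balT_ones : ∀ n k, k ≤ 2 ^ n → ones (balT n k) = k
  | 0, k, hk => by
      rcases Nat.lt_or_ge k 1 with h | h
      · have : k = 0 := by omega
        subst this
        simp only [balT, if_pos rfl]
        exact ones_leaf_zero
      · have : k = 1 := by omega
        subst this
        simp only [balT]
        norm_num
        exact ones_leaf_one
  | n + 1, k, hk => by
      have h2 : 2 ^ (n + 1) = 2 * 2 ^ n := by ring
      show ones (.node (balT n ((k + 1) / 2)) (balT n (k / 2))) = k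
      rw [ones_node, balT_ones n _ (by omega), balT_ones n _ (by omega)]
      omega

lemma balT_Bp (p : ℝ) : ∀ n k, Bp p (balT n k) = Mv p n k
  | 0, k => by
      show (if k = 0 then (0:ℝ) else 1) = _
      rw [Mv]
  | n + 1, k => by
      show fp p (Bp p (balT n ((k + 1) / 2))) (Bp p (balT n (k / 2))) = _
      rw [balT_Bp p n, balT_Bp p n, Mv]

end Aux

open Aux

/-- in a big-optimal tree of depth `n+1` with exactly `k` ones,
the numbers of 1-labelled leaves in the two subtrees of the root differ by at most 1. -/
theorem big_optimal_balanced (p : ℝ) (hp : p ∈ Set.Ioo (1 / 2 : ℝ) 1)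
    (n k : ℕ) (hk : k ≤ 2 ^ (n + 1))
    (t : BT ℝ (n + 1)) (ht01 : ZeroOne t) (htk : ones t = k)
    (hmax : ∀ t' : BT ℝ (n + 1), ZeroOne t' → ones t' = k → Bp p t' ≤ Bp p t)
    (L R : BT ℝ n) (hLR : t = BT.node L R) :
    |(ones L : ℤ) - (ones R : ℤ)| ≤ 1 := by
  obtain ⟨hp1, hp2⟩ := hp
  subst hLR
  obtain ⟨hL, hR⟩ := zeroOne_node ht01
  have hk' : ones L + ones R = k := by rw [← ones_node]; exact htk
  -- main auxiliary claim: an unbalanced node cannot dominate the optimum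
  have main : ∀ A B : BT ℝ n, ZeroOne A → ZeroOne B → ones A + ones B = k →
      ones B + 2 ≤ ones A → ¬ (Bp p (BT.node L R) ≤ Bp p (BT.node A B)) := by
    intro A B hA hB hABk hgap hle
    obtain ⟨a', ha'⟩ : ∃ a', ones A = a' + 1 := ⟨ones A - 1, by omega⟩
    have haA : a' + 1 ≤ 2 ^ n := ha' ▸ ones_le A
    have hbB : ones B + 1 ≤ 2 ^ n := by omega
    obtain ⟨r0, r1⟩ := Bp_mem hp1 hp2 B hB
    obtain ⟨mL0, mL1⟩ := M_mem hp1 hp2 n (ones A) (ones_le A)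
    obtain ⟨mR0, mR1⟩ := M_mem hp1 hp2 n (ones B) (ones_le B)
    have h1 : Bp p (BT.node A B) ≤ fp p (Mv p n (ones A)) (Mv p n (ones B)) :=
      fp_mono hp1 hp2 (Bp_le_M hp1 hp2 A hA) (Bp_le_M hp1 hp2 B hB) r0 r1 mL0 mL1
    have h2 : fp p (Mv p n (ones A)) (Mv p n (ones B)) <
        fp p (Mv p n a') (Mv p n (ones B + 1)) := by
      rw [ha']
      exact M_C hp1 hp2 (by omega) haA
    set t' : BT ℝ (n + 1) := BT.node (balT n a') (balT n (ones B + 1)) with ht'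
    have ht'01 : ZeroOne t' := by
      intro x hx
      rcases List.mem_append.1 hx with hx | hx
      · exact balT_zeroOne n a' x hx
      · exact balT_zeroOne n (ones B + 1) x hx
    have ht'k : ones t' = k := by
      rw [ht', ones_node, balT_ones n a' (by omega), balT_ones n _ hbB]
      omega
    have hBpt' : Bp p t' = fp p (Mv p n a') (Mv p n (ones B + 1)) := by
      show fp p (Bp p (balT n a')) (Bp p (balT n (ones B + 1))) = _
      rw [balT_Bp, balT_Bp]
    have := hmax t' ht'01 ht'k
    rw [hBpt'] at this
    have hAB : Bp p (BT.node A B) = fp p (Bp p A) (Bp p B) := rfl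
    linarith
  by_contra hcon
  push_neg at hcon
  rcases lt_abs.mp hcon with h | h
  · -- ones R + 2 ≤ ones L
    exact main L R hL hR hk' (by omega) le_rfl
  · -- ones L + 2 ≤ ones R
    refine main R L hR hL (by omega) (by omega) ?_
    have : Bp p (BT.node R L) = Bp p (BT.node L R) := fp_comm p _ _
    exact this.ge
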